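/- arXiv:1807.06256 — 2 statements merged into one kernel-verified Lean document; each statement's English description precedes it below -/
import Mathlib

section
/- Let p be a real polynomial in N variables, written as p = Σ_m α_m Π_{i∈m} x_i over its monomials m, with C = Σ_m |α_m| the sum of the absolute values of its coefficients. Let A_1, …, A_N be real matrices of the same dimensions, and let B = p(A_1, …, A_N) be the matrix obtained by substituting A_i for x_i and using the entrywise (Hadamard) product as multiplication. Then γ₂(B) ≤ C · (max(1, max_{i∈[N]} γ₂(A_i)))^{deg p}. -/
set_option linter.unusedSectionVars false
set_option maxHeartbeats 1000000


open MvPolynomial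

noncomputable section

/-- Real encoding of a bit: `true ↦ 1`, `false ↦ 0`. -/
def bReal (b : Bool) : ℝ := if b then 1 else 0

/-- `±1` encoding of a bit: `true ↦ 1`, `false ↦ -1`. -/
def bPM (b : Bool) : ℝ := if b then 1 else -1

/-- Hamming weight of a Boolean string. -/
def wt {ι : Type*} [Fintype ι] (x : ι → Bool) : ℕ :=
  (Finset.univ.filter (fun i => x i = true)).card

/-- Approximate degree of a total Boolean function: the least degree of a real polynomial
approximating the function pointwise to error `1/3` on the Boolean cube. -/
noncomputable def adeg {ι : Type*} (f : (ι → Bool) → Bool) : ℕ :=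
  sInf {d : ℕ | ∃ p : MvPolynomial ι ℝ, p.totalDegree ≤ d ∧
    ∀ x : ι → Bool, |MvPolynomial.eval (fun i => bReal (x i)) p - bReal (f x)| ≤ 1/3}

/-- Bounded approximate degree of a partial Boolean function (`none` = undefined `*`):
the polynomial must be in `[0,1]` on all Boolean inputs and approximate the function
to error `1/3` on the domain. -/
noncomputable def bdeg {ι : Type*} (h : (ι → Bool) → Option Bool) : ℕ :=
  sInf {d : ℕ | ∃ p : MvPolynomial ι ℝ, p.totalDegree ≤ d ∧
    (∀ x : ι → Bool, MvPolynomial.eval (fun i => bReal (x i)) p ∈ Set.Icc (0:ℝ) 1) ∧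
    ∀ (x : ι → Bool) (b : Bool), h x = some b →
      |MvPolynomial.eval (fun i => bReal (x i)) p - bReal b| ≤ 1/3}

/-- `OR_n ∘ f`: the OR of `n` disjoint copies of `f`. -/
def orComp (n m : ℕ) (f : (Fin m → Bool) → Bool) : (Fin n × Fin m → Bool) → Bool :=
  fun x => decide (∃ i : Fin n, f (fun j => x (i, j)) = true)

/-- `g ∘ f`: block composition of Boolean functions. -/
def gComp {n m : ℕ} (g : (Fin n → Bool) → Bool) (f : (Fin m → Bool) → Bool) :
    (Fin n × Fin m → Bool) → Bool :=
  fun x => g (fun i => f (fun j => x (i, j)))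

/-- A Boolean function is symmetric if it depends only on the Hamming weight. -/
def IsSymmetricBF {n : ℕ} (g : (Fin n → Bool) → Bool) : Prop :=
  ∀ x y : Fin n → Bool, wt x = wt y → g x = g y

/-- `PrOR_n`: the promise-OR partial function (weight 0 ↦ 0, weight 1 ↦ 1, else `*`). -/
def prOR (n : ℕ) : (Fin n → Bool) → Option Bool :=
  fun x => if wt x = 0 then some false else if wt x = 1 then some true else none

/-- `PrOR_n ∘ f` for a total inner function `f`. -/
def prorComp (n m : ℕ) (f : (Fin m → Bool) → Bool) : (Fin n × Fin m → Bool) → Option Bool :=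
  fun x => prOR n (fun i => f (fun j => x (i, j)))

/-- `OR_n ∘ (f₁, …, f_n)`: the OR of `n` possibly different functions on disjoint blocks. -/
def orMulti (n : ℕ) (m : Fin n → ℕ) (f : ∀ i, (Fin (m i) → Bool) → Bool) :
    ((Σ i, Fin (m i)) → Bool) → Bool :=
  fun x => decide (∃ i : Fin n, f i (fun j => x ⟨i, j⟩) = true)

/-- Parity (XOR) of a Boolean string. -/
def parityB {ι : Type*} [Fintype ι] (x : ι → Bool) : Bool := decide (wt x % 2 = 1)

/-- The combinatorial group testing oracle string of a hidden input `x`: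
coordinate `S` is the OR of the bits of `x` in `S`. -/
def cgtInput {n : ℕ} (x : Fin n → Bool) : Finset (Fin n) → Bool :=
  fun S => decide (∃ i ∈ S, x i = true)

/-- The `γ₂` norm of a real matrix: the infimum over factorizations `A = B * C` of the
product of the largest `ℓ₂` row norm of `B` and the largest `ℓ₂` column norm of `C`. -/
noncomputable def gamma2 {X Y : Type*} (A : Matrix X Y ℝ) : ℝ :=
  sInf {r : ℝ | ∃ (k : ℕ) (B : Matrix X (Fin k) ℝ) (C : Matrix (Fin k) Y ℝ),
    A = B * C ∧
    r = (⨆ x, Real.sqrt (∑ j, (B x j) ^ 2)) * (⨆ y, Real.sqrt (∑ j, (C j y) ^ 2))}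

/-- `A` approximates the sign matrix of the total communication function `F` to error `ε`. -/
def ApproxMat {X Y : Type*} (A : Matrix X Y ℝ) (F : X → Y → Bool) (ε : ℝ) : Prop :=
  (∀ x y, |A x y - bPM (F x y)| ≤ ε) ∧ (∀ x y, |A x y| ≤ 1)

/-- `ε`-approximate `γ₂` norm of a total communication function. -/
noncomputable def gamma2Eps {X Y : Type*} (F : X → Y → Bool) (ε : ℝ) : ℝ :=
  sInf {r : ℝ | ∃ A : Matrix X Y ℝ, ApproxMat A F ε ∧ r = gamma2 A}

/-- `ε`-approximate rank of a total communication function. -/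
noncomputable def rankEps {X Y : Type*} [Fintype X] [Fintype Y]
    (F : X → Y → Bool) (ε : ℝ) : ℕ :=
  sInf {r : ℕ | ∃ A : Matrix X Y ℝ, ApproxMat A F ε ∧ A.rank = r}

/-- Approximate `γ₂` norm (error `2/3`, matching sign-matrix entries in `{-1,1}`). -/
noncomputable def agamma2 {X Y : Type*} (F : X → Y → Bool) : ℝ := gamma2Eps F (2/3)

/-- Approximate rank (error `2/3`). -/
noncomputable def arank {X Y : Type*} [Fintype X] [Fintype Y] (F : X → Y → Bool) : ℕ :=
  rankEps F (2/3)

/-- `A` approximates a partial communication function `F` to error `ε`. -/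
def ApproxMatP {X Y : Type*} (A : Matrix X Y ℝ) (F : X → Y → Option Bool) (ε : ℝ) : Prop :=
  (∀ x y b, F x y = some b → |A x y - bPM b| ≤ ε) ∧ (∀ x y, |A x y| ≤ 1)

/-- Approximate `γ₂` norm of a partial communication function (error `2/3`). -/
noncomputable def agamma2P {X Y : Type*} (F : X → Y → Option Bool) : ℝ :=
  sInf {r : ℝ | ∃ A : Matrix X Y ℝ, ApproxMatP A F (2/3) ∧ r = gamma2 A}

/-- The set disjointness communication function. -/
def DISJ (n : ℕ) : (Fin n → Bool) → (Fin n → Bool) → Bool :=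
  fun x y => decide (∃ i, x i = true ∧ y i = true)

/-- `OR_n ∘ F` in communication complexity. -/
def orComm {X Y : Type*} (n : ℕ) (F : X → Y → Bool) :
    (Fin n → X) → (Fin n → Y) → Bool :=
  fun x y => decide (∃ i, F (x i) (y i) = true)

/-- `XOR_n ∘ F` in communication complexity. -/
def xorComm {X Y : Type*} (n : ℕ) (F : X → Y → Bool) :
    (Fin n → X) → (Fin n → Y) → Bool :=
  fun x y => parityB (fun i => F (x i) (y i))

/-- `g ∘ F` in communication complexity, for an outer Boolean function `g`. -/
def gComm {X Y : Type*} {n : ℕ} (g : (Fin n → Bool) → Bool) (F : X → Y → Bool) :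
    (Fin n → X) → (Fin n → Y) → Bool :=
  fun x y => g (fun i => F (x i) (y i))

/-- `PrOR_n ∘ F` for a partial communication function `F`: the output is `*` if some
inner value is `*` or if the tuple of inner values is outside the promise of `PrOR_n`. -/
def prorComm {X Y : Type*} (n : ℕ) (F : X → Y → Option Bool) :
    (Fin n → X) → (Fin n → Y) → Option Bool :=
  fun x y =>
    if ∀ i, (F (x i) (y i)).isSome then
      prOR n (fun i => (F (x i) (y i)).getD false)
    else none

/-- Two communication functions are equivalent (identical up to permuting rows/columns and
deleting/duplicating repeated rows/columns) iff each is an image of the other under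
row and column reindexing maps. -/
def CommEquiv {X Y X' Y' : Type*} (F : X → Y → Bool) (G : X' → Y' → Bool) : Prop :=
  ∃ (φ : X → X') (ψ : Y → Y') (φ' : X' → X) (ψ' : Y' → Y),
    (∀ x y, F x y = G (φ x) (ψ y)) ∧ (∀ x' y', G x' y' = F (φ' x') (ψ' y'))

/-- `F` is equivalent to some instance of the not-equal function `NOTEQ`. -/
def IsNotEqualLike {X Y : Type*} (F : X → Y → Bool) : Prop :=
  ∃ (S T : Finset ℕ),
    CommEquiv F (fun (x : {a // a ∈ S}) (y : {a // a ∈ T}) => decide ((x : ℕ) ≠ (y : ℕ)))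


namespace G2Aux

variable {X Y : Type*} [Fintype X] [Fintype Y]

def g2set (A : Matrix X Y ℝ) : Set ℝ :=
  {r : ℝ | ∃ (k : ℕ) (B : Matrix X (Fin k) ℝ) (C : Matrix (Fin k) Y ℝ),
    A = B * C ∧
    r = (⨆ x, Real.sqrt (∑ j, (B x j) ^ 2)) * (⨆ y, Real.sqrt (∑ j, (C j y) ^ 2))}

lemma gamma2_eq (A : Matrix X Y ℝ) : gamma2 A = sInf (g2set A) := rfl

lemma g2set_nonneg {A : Matrix X Y ℝ} {r : ℝ} (hr : r ∈ g2set A) : 0 ≤ r := by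
  obtain ⟨k, B, C, -, rfl⟩ := hr
  exact mul_nonneg (Real.iSup_nonneg fun _ => Real.sqrt_nonneg _)
    (Real.iSup_nonneg fun _ => Real.sqrt_nonneg _)

lemma g2set_bddBelow (A : Matrix X Y ℝ) : BddBelow (g2set A) :=
  ⟨0, fun _ hr => g2set_nonneg hr⟩

lemma mem_g2set {J : Type*} [Fintype J] (A : Matrix X Y ℝ) (B : Matrix X J ℝ)
    (C : Matrix J Y ℝ) (h : A = B * C) :
    ((⨆ x, Real.sqrt (∑ j, (B x j) ^ 2)) * (⨆ y, Real.sqrt (∑ j, (C j y) ^ 2))) ∈ g2set A := by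
  classical
  obtain e := Fintype.equivFin J
  refine ⟨Fintype.card J, fun x j => B x (e.symm j), fun j y => C (e.symm j) y, ?_, ?_⟩
  · ext x y
    rw [h]
    simp only [Matrix.mul_apply]
    exact (Equiv.sum_comp e.symm fun j => B x j * C j y).symm
  · congr 1
    · exact (iSup_congr fun x => by rw [Equiv.sum_comp e.symm fun j => B x j ^ 2]).symm
    · exact (iSup_congr fun y => by rw [Equiv.sum_comp e.symm fun j => C j y ^ 2]).symm

lemma g2set_nonempty (A : Matrix X Y ℝ) : (g2set A).Nonempty := by
  classical
  exact ⟨_, mem_g2set A A (1 : Matrix Y Y ℝ) (Matrix.mul_one A).symm⟩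

lemma gamma2_nonneg (A : Matrix X Y ℝ) : 0 ≤ gamma2 A :=
  Real.sInf_nonneg fun _ hr => g2set_nonneg hr

lemma gamma2_le {J : Type*} [Fintype J] (A : Matrix X Y ℝ) (B : Matrix X J ℝ)
    (C : Matrix J Y ℝ) (h : A = B * C) :
    gamma2 A ≤ (⨆ x, Real.sqrt (∑ j, (B x j) ^ 2)) * (⨆ y, Real.sqrt (∑ j, (C j y) ^ 2)) :=
  csInf_le (g2set_bddBelow A) (mem_g2set A B C h)

lemma gamma2_le_of_bounds {J : Type*} [Fintype J] (A : Matrix X Y ℝ) (B : Matrix X J ℝ)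
    (C : Matrix J Y ℝ) (h : A = B * C) {Z : ℝ} (hZ : 0 ≤ Z)
    (hB : ∀ x, ∑ j, (B x j) ^ 2 ≤ Z) (hC : ∀ y, ∑ j, (C j y) ^ 2 ≤ Z) :
    gamma2 A ≤ Z := by
  refine le_trans (gamma2_le A B C h) ?_
  have h1 : (⨆ x, Real.sqrt (∑ j, (B x j) ^ 2)) ≤ Real.sqrt Z :=
    Real.iSup_le (fun x => Real.sqrt_le_sqrt (hB x)) (Real.sqrt_nonneg _)
  have h2 : (⨆ y, Real.sqrt (∑ j, (C j y) ^ 2)) ≤ Real.sqrt Z :=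
    Real.iSup_le (fun y => Real.sqrt_le_sqrt (hC y)) (Real.sqrt_nonneg _)
  calc (⨆ x, Real.sqrt (∑ j, (B x j) ^ 2)) * (⨆ y, Real.sqrt (∑ j, (C j y) ^ 2))
      ≤ Real.sqrt Z * Real.sqrt Z :=
        mul_le_mul h1 h2 (Real.iSup_nonneg fun _ => Real.sqrt_nonneg _) (Real.sqrt_nonneg _)
    _ = Z := Real.mul_self_sqrt hZ

lemma exists_balanced (A : Matrix X Y ℝ) {r : ℝ} (hr : gamma2 A < r) :
    ∃ (k : ℕ) (B : Matrix X (Fin k) ℝ) (C : Matrix (Fin k) Y ℝ),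
      A = B * C ∧ (∀ x, ∑ j, (B x j) ^ 2 ≤ r) ∧ (∀ y, ∑ j, (C j y) ^ 2 ≤ r) := by
  have hr0 : 0 ≤ r := le_of_lt (lt_of_le_of_lt (gamma2_nonneg A) hr)
  obtain ⟨s, hs, hsr⟩ := exists_lt_of_csInf_lt (g2set_nonempty A) hr
  obtain ⟨k, B, C, hBC, rfl⟩ := hs
  set a : ℝ := ⨆ x, Real.sqrt (∑ j, (B x j) ^ 2) with ha_def
  set b : ℝ := ⨆ y, Real.sqrt (∑ j, (C j y) ^ 2) with hb_def
  have ha0 : 0 ≤ a := Real.iSup_nonneg fun _ => Real.sqrt_nonneg _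
  have hb0 : 0 ≤ b := Real.iSup_nonneg fun _ => Real.sqrt_nonneg _
  have hale : ∀ x, Real.sqrt (∑ j, (B x j) ^ 2) ≤ a := fun x =>
    le_ciSup (f := fun x => Real.sqrt (∑ j, (B x j) ^ 2))
      (Set.Finite.bddAbove (Set.finite_range _)) x
  have hble : ∀ y, Real.sqrt (∑ j, (C j y) ^ 2) ≤ b := fun y =>
    le_ciSup (f := fun y => Real.sqrt (∑ j, (C j y) ^ 2))
      (Set.Finite.bddAbove (Set.finite_range _)) y
  by_cases hA : A = 0
  · refine ⟨0, fun _ j => j.elim0, fun j _ => j.elim0, ?_, ?_, ?_⟩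
    · rw [hA]; exact Matrix.ext fun x y =>
        (Fintype.sum_empty (fun j : Fin 0 => (j.elim0 : ℝ) * j.elim0)).symm
    · intro x; simpa using hr0
    · intro y; simpa using hr0
  · have ha : 0 < a := by
      rcases ha0.lt_or_eq with h | h
      · exact h
      · exfalso; apply hA
        ext x y
        rw [hBC]
        simp only [Matrix.mul_apply]
        have hx : ∑ j, (B x j) ^ 2 = 0 := by
          have h1 := hale x
          rw [← h] at h1
          have := Real.sqrt_nonneg (∑ j, (B x j) ^ 2)
          have h3 : 0 ≤ ∑ j, (B x j) ^ 2 := Finset.sum_nonneg fun j _ => sq_nonneg _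
          nlinarith [Real.sq_sqrt h3]
        have hz : ∀ j ∈ Finset.univ, (B x j) ^ 2 = 0 :=
          (Finset.sum_eq_zero_iff_of_nonneg fun j _ => sq_nonneg _).1 hx
        have : ∀ j, B x j = 0 := fun j => by
          have := hz j (Finset.mem_univ j); nlinarith [this]
        simp [this]
    have hb : 0 < b := by
      rcases hb0.lt_or_eq with h | h
      · exact h
      · exfalso; apply hA
        ext x y
        rw [hBC]
        simp only [Matrix.mul_apply]
        have hy : ∑ j, (C j y) ^ 2 = 0 := by
          have h1 := hble y
          rw [← h] at h1
          have := Real.sqrt_nonneg (∑ j, (C j y) ^ 2)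
          have h3 : 0 ≤ ∑ j, (C j y) ^ 2 := Finset.sum_nonneg fun j _ => sq_nonneg _
          nlinarith [Real.sq_sqrt h3]
        have hz : ∀ j ∈ Finset.univ, (C j y) ^ 2 = 0 :=
          (Finset.sum_eq_zero_iff_of_nonneg fun j _ => sq_nonneg _).1 hy
        have : ∀ j, C j y = 0 := fun j => by
          have := hz j (Finset.mem_univ j); nlinarith [this]
        simp [this]
    have hone : Real.sqrt (b / a) * Real.sqrt (a / b) = 1 := by
      rw [← Real.sqrt_mul (by positivity)]
      rw [show b / a * (a / b) = 1 by field_simp]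
      exact Real.sqrt_one
    refine ⟨k, fun x j => Real.sqrt (b / a) * B x j, fun j y => Real.sqrt (a / b) * C j y,
      ?_, ?_, ?_⟩
    · ext x y
      rw [hBC]
      simp only [Matrix.mul_apply]
      refine Finset.sum_congr rfl fun j _ => ?_
      calc B x j * C j y = (Real.sqrt (b / a) * Real.sqrt (a / b)) * (B x j * C j y) := by
            rw [hone, one_mul]
        _ = Real.sqrt (b / a) * B x j * (Real.sqrt (a / b) * C j y) := by ring
    · intro x
      have hx : ∑ j, (B x j) ^ 2 ≤ a ^ 2 := by
        have h3 : 0 ≤ ∑ j, (B x j) ^ 2 := Finset.sum_nonneg fun j _ => sq_nonneg _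
        nlinarith [hale x, Real.sq_sqrt h3, Real.sqrt_nonneg (∑ j, (B x j) ^ 2)]
      have heq : ∑ j, (Real.sqrt (b / a) * B x j) ^ 2 = (b / a) * ∑ j, (B x j) ^ 2 := by
        rw [Finset.mul_sum]
        refine Finset.sum_congr rfl fun j _ => ?_
        rw [mul_pow, Real.sq_sqrt (by positivity)]
      rw [heq]
      calc (b / a) * ∑ j, (B x j) ^ 2 ≤ (b / a) * a ^ 2 :=
            mul_le_mul_of_nonneg_left hx (by positivity)
        _ = a * b := by field_simp
        _ ≤ r := le_of_lt hsr
    · intro y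
      have hy : ∑ j, (C j y) ^ 2 ≤ b ^ 2 := by
        have h3 : 0 ≤ ∑ j, (C j y) ^ 2 := Finset.sum_nonneg fun j _ => sq_nonneg _
        nlinarith [hble y, Real.sq_sqrt h3, Real.sqrt_nonneg (∑ j, (C j y) ^ 2)]
      have heq : ∑ j, (Real.sqrt (a / b) * C j y) ^ 2 = (a / b) * ∑ j, (C j y) ^ 2 := by
        rw [Finset.mul_sum]
        refine Finset.sum_congr rfl fun j _ => ?_
        rw [mul_pow, Real.sq_sqrt (by positivity)]
      rw [heq]
      calc (a / b) * ∑ j, (C j y) ^ 2 ≤ (a / b) * b ^ 2 :=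
            mul_le_mul_of_nonneg_left hy (by positivity)
        _ = a * b := by field_simp
        _ ≤ r := le_of_lt hsr

end G2Aux

open G2Aux

/-- plugging matrices into a polynomial (with Hadamard products) multiplies
the `γ₂` norm by at most the coefficient sum times `max(1, max γ₂(A_i))^{deg p}`. -/
theorem stmt12 {X Y : Type*} [Fintype X] [Fintype Y] (N : ℕ)
    (p : MvPolynomial (Fin N) ℝ) (A : Fin N → Matrix X Y ℝ) :
    gamma2 (Matrix.of fun x y => MvPolynomial.eval (fun i => A i x y) p) ≤
      (∑ m ∈ p.support, |MvPolynomial.coeff m p|) *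
        (max 1 (⨆ i, gamma2 (A i))) ^ p.totalDegree := by
    classical
  set D := p.totalDegree with hD
  set Csum := ∑ m ∈ p.support, |MvPolynomial.coeff m p| with hCsum
  set M := max 1 (⨆ i, gamma2 (A i)) with hM
  have hCsum0 : 0 ≤ Csum := Finset.sum_nonneg fun m _ => abs_nonneg _
  have hM1 : (1 : ℝ) ≤ M := le_max_left _ _
  have hMi : ∀ i, gamma2 (A i) ≤ M := fun i =>
    le_trans (le_ciSup (f := fun i => gamma2 (A i))
      (Set.Finite.bddAbove (Set.finite_range _)) i) (le_max_right _ _)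
  have key : ∀ M', M < M' → gamma2 (Matrix.of fun x y =>
      MvPolynomial.eval (fun i => A i x y) p) ≤ Csum * M' ^ D := by
    intro M' hM'
    have h1M' : (1 : ℝ) ≤ M' := le_trans hM1 hM'.le
    have h0M' : (0 : ℝ) < M' := lt_of_lt_of_le one_pos h1M'
    have hbal : ∀ i, ∃ (k : ℕ) (Bf : Matrix X (Fin k) ℝ) (Cf : Matrix (Fin k) Y ℝ),
        A i = Bf * Cf ∧ (∀ x, ∑ j, (Bf x j) ^ 2 ≤ M') ∧ (∀ y, ∑ j, (Cf j y) ^ 2 ≤ M') :=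
      fun i => exists_balanced (A i) (lt_of_le_of_lt (hMi i) hM')
    choose κ Bf Cf hfac hrow hcol using hbal
    -- index type
    let σ : {m // m ∈ p.support} → Type := fun m => Σ i : Fin N, Fin ((m : Fin N →₀ ℕ) i)
    let J : Type := Σ m : {m // m ∈ p.support}, ((s : σ m) → Fin (κ s.1))
    let B : Matrix X J ℝ := fun x mj =>
      Real.sqrt |MvPolynomial.coeff (mj.1 : Fin N →₀ ℕ) p| * ∏ s, Bf s.1 x (mj.2 s)
    let C : Matrix J Y ℝ := fun mj y =>
      (if MvPolynomial.coeff (mj.1 : Fin N →₀ ℕ) p < 0 then (-1 : ℝ) else 1) *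
        Real.sqrt |MvPolynomial.coeff (mj.1 : Fin N →₀ ℕ) p| * ∏ s, Cf s.1 (mj.2 s) y
    have hsq : ∀ m : {m // m ∈ p.support},
        (if MvPolynomial.coeff (m : Fin N →₀ ℕ) p < 0 then (-1 : ℝ) else 1) *
          (Real.sqrt |MvPolynomial.coeff (m : Fin N →₀ ℕ) p| *
            Real.sqrt |MvPolynomial.coeff (m : Fin N →₀ ℕ) p|) =
          MvPolynomial.coeff (m : Fin N →₀ ℕ) p := by
      intro m
      rw [Real.mul_self_sqrt (abs_nonneg _)]
      split_ifs with h
      · rw [abs_of_neg h]; ring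
      · rw [abs_of_nonneg (not_lt.1 h)]; ring
    have hdeg : ∀ m : {m // m ∈ p.support}, Fintype.card (σ m) ≤ D := by
      intro m
      have h1 : Fintype.card (σ m) = ∑ i, (m : Fin N →₀ ℕ) i := by
        simp [σ, Fintype.card_sigma]
      have h2 : ∑ i, (m : Fin N →₀ ℕ) i = (m : Fin N →₀ ℕ).sum fun _ e => e :=
        (Finsupp.sum_fintype (m : Fin N →₀ ℕ) (fun _ e => e) fun _ => rfl).symm
      rw [h1, h2]
      exact MvPolynomial.le_totalDegree m.2
    -- factorization
    have hprod : (Matrix.of fun x y => MvPolynomial.eval (fun i => A i x y) p) = B * C := by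
      ext x y
      show MvPolynomial.eval (fun i => A i x y) p = (B * C) x y
      rw [Matrix.mul_apply, MvPolynomial.eval_eq']
      rw [← Finset.univ_sigma_univ, Finset.sum_sigma]
      rw [← Finset.sum_coe_sort p.support
        (fun m => MvPolynomial.coeff m p * ∏ i, (A i x y) ^ m i)]
      refine Finset.sum_congr rfl fun m _ => Eq.symm ?_
      have hterm : ∀ j : (s : σ m) → Fin (κ s.1),
          B x ⟨m, j⟩ * C ⟨m, j⟩ y =
            (if MvPolynomial.coeff (m : Fin N →₀ ℕ) p < 0 then (-1 : ℝ) else 1) *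
              (Real.sqrt |MvPolynomial.coeff (m : Fin N →₀ ℕ) p| *
                Real.sqrt |MvPolynomial.coeff (m : Fin N →₀ ℕ) p|) *
              ∏ s, (Bf s.1 x (j s) * Cf s.1 (j s) y) := by
        intro j
        show (Real.sqrt _ * ∏ s, Bf s.1 x (j s)) *
          ((if _ then (-1:ℝ) else 1) * Real.sqrt _ * ∏ s, Cf s.1 (j s) y) = _
        rw [Finset.prod_mul_distrib]
        ring
      calc ∑ j : (s : σ m) → Fin (κ s.1), B x ⟨m, j⟩ * C ⟨m, j⟩ y
          = MvPolynomial.coeff (m : Fin N →₀ ℕ) p *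
              ∑ j : (s : σ m) → Fin (κ s.1), ∏ s, (Bf s.1 x (j s) * Cf s.1 (j s) y) := by
            rw [Finset.mul_sum]
            refine Finset.sum_congr rfl fun j _ => ?_
            rw [hterm j, hsq m]
        _ = MvPolynomial.coeff (m : Fin N →₀ ℕ) p *
              ∏ s : σ m, ∑ k, (Bf s.1 x k * Cf s.1 k y) := by
            rw [Fintype.prod_sum fun (s : σ m) (k : Fin (κ s.1)) => Bf s.1 x k * Cf s.1 k y]
        _ = MvPolynomial.coeff (m : Fin N →₀ ℕ) p * ∏ s : σ m, A s.1 x y := by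
            congr 1
            refine Finset.prod_congr rfl fun s _ => ?_
            rw [hfac s.1, Matrix.mul_apply]
        _ = MvPolynomial.coeff (m : Fin N →₀ ℕ) p *
              ∏ i, (A i x y) ^ ((m : Fin N →₀ ℕ) i) := by
            congr 1
            rw [← Finset.univ_sigma_univ, Finset.prod_sigma]
            exact Finset.prod_congr rfl fun i _ => by
              simp
    -- row bounds
    have hBrow : ∀ x, ∑ mj : J, (B x mj) ^ 2 ≤ Csum * M' ^ D := by
      intro x
      rw [← Finset.univ_sigma_univ, Finset.sum_sigma]
      have hterm : ∀ m : {m // m ∈ p.support},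
          ∑ j : (s : σ m) → Fin (κ s.1), (B x ⟨m, j⟩) ^ 2 ≤
            |MvPolynomial.coeff (m : Fin N →₀ ℕ) p| * M' ^ D := by
        intro m
        have h1 : ∀ j : (s : σ m) → Fin (κ s.1),
            (B x ⟨m, j⟩) ^ 2 = |MvPolynomial.coeff (m : Fin N →₀ ℕ) p| *
              ∏ s, (Bf s.1 x (j s)) ^ 2 := by
          intro j
          show (Real.sqrt _ * ∏ s, Bf s.1 x (j s)) ^ 2 = _
          rw [mul_pow, Real.sq_sqrt (abs_nonneg _), Finset.prod_pow]
        calc ∑ j : (s : σ m) → Fin (κ s.1), (B x ⟨m, j⟩) ^ 2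
            = ∑ j : (s : σ m) → Fin (κ s.1), |MvPolynomial.coeff (m : Fin N →₀ ℕ) p| *
                ∏ s, (Bf s.1 x (j s)) ^ 2 := Finset.sum_congr rfl fun j _ => h1 j
          _ = |MvPolynomial.coeff (m : Fin N →₀ ℕ) p| *
                ∑ j : (s : σ m) → Fin (κ s.1), ∏ s, (Bf s.1 x (j s)) ^ 2 :=
              (Finset.mul_sum _ _ _).symm
          _ = |MvPolynomial.coeff (m : Fin N →₀ ℕ) p| *
                ∏ s : σ m, ∑ k, (Bf s.1 x k) ^ 2 := by
              rw [Fintype.prod_sum fun (s : σ m) (k : Fin (κ s.1)) => (Bf s.1 x k) ^ 2]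
          _ ≤ |MvPolynomial.coeff (m : Fin N →₀ ℕ) p| * M' ^ D := by
              refine mul_le_mul_of_nonneg_left ?_ (abs_nonneg _)
              calc ∏ s : σ m, ∑ k, (Bf s.1 x k) ^ 2 ≤ ∏ s : σ m, M' :=
                    Finset.prod_le_prod
                      (fun s _ => Finset.sum_nonneg fun k _ => sq_nonneg _)
                      (fun s _ => hrow s.1 x)
                _ = M' ^ Fintype.card (σ m) := by
                    rw [Finset.prod_const, Finset.card_univ]
                _ ≤ M' ^ D := pow_le_pow_right₀ h1M' (hdeg m)
      calc ∑ m : {m // m ∈ p.support}, ∑ j : (s : σ m) → Fin (κ s.1), (B x ⟨m, j⟩) ^ 2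
          ≤ ∑ m : {m // m ∈ p.support},
              |MvPolynomial.coeff (m : Fin N →₀ ℕ) p| * M' ^ D :=
            Finset.sum_le_sum fun m _ => hterm m
        _ = Csum * M' ^ D := by
            rw [← Finset.sum_mul, hCsum,
              Finset.sum_coe_sort p.support fun m => |MvPolynomial.coeff m p|]
    have hCcol : ∀ y, ∑ mj : J, (C mj y) ^ 2 ≤ Csum * M' ^ D := by
      intro y
      rw [← Finset.univ_sigma_univ, Finset.sum_sigma]
      have hterm : ∀ m : {m // m ∈ p.support},
          ∑ j : (s : σ m) → Fin (κ s.1), (C ⟨m, j⟩ y) ^ 2 ≤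
            |MvPolynomial.coeff (m : Fin N →₀ ℕ) p| * M' ^ D := by
        intro m
        have h1 : ∀ j : (s : σ m) → Fin (κ s.1),
            (C ⟨m, j⟩ y) ^ 2 = |MvPolynomial.coeff (m : Fin N →₀ ℕ) p| *
              ∏ s, (Cf s.1 (j s) y) ^ 2 := by
          intro j
          show ((if _ then (-1:ℝ) else 1) * Real.sqrt _ * ∏ s, Cf s.1 (j s) y) ^ 2 = _
          rw [mul_pow, mul_pow, Real.sq_sqrt (abs_nonneg _), Finset.prod_pow]
          split_ifs <;> ring
        calc ∑ j : (s : σ m) → Fin (κ s.1), (C ⟨m, j⟩ y) ^ 2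
            = ∑ j : (s : σ m) → Fin (κ s.1), |MvPolynomial.coeff (m : Fin N →₀ ℕ) p| *
                ∏ s, (Cf s.1 (j s) y) ^ 2 := Finset.sum_congr rfl fun j _ => h1 j
          _ = |MvPolynomial.coeff (m : Fin N →₀ ℕ) p| *
                ∑ j : (s : σ m) → Fin (κ s.1), ∏ s, (Cf s.1 (j s) y) ^ 2 :=
              (Finset.mul_sum _ _ _).symm
          _ = |MvPolynomial.coeff (m : Fin N →₀ ℕ) p| *
                ∏ s : σ m, ∑ k, (Cf s.1 k y) ^ 2 := by
              rw [Fintype.prod_sum fun (s : σ m) (k : Fin (κ s.1)) => (Cf s.1 k y) ^ 2]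
          _ ≤ |MvPolynomial.coeff (m : Fin N →₀ ℕ) p| * M' ^ D := by
              refine mul_le_mul_of_nonneg_left ?_ (abs_nonneg _)
              calc ∏ s : σ m, ∑ k, (Cf s.1 k y) ^ 2 ≤ ∏ s : σ m, M' :=
                    Finset.prod_le_prod
                      (fun s _ => Finset.sum_nonneg fun k _ => sq_nonneg _)
                      (fun s _ => hcol s.1 y)
                _ = M' ^ Fintype.card (σ m) := by
                    rw [Finset.prod_const, Finset.card_univ]
                _ ≤ M' ^ D := pow_le_pow_right₀ h1M' (hdeg m)
      calc ∑ m : {m // m ∈ p.support}, ∑ j : (s : σ m) → Fin (κ s.1), (C ⟨m, j⟩ y) ^ 2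
          ≤ ∑ m : {m // m ∈ p.support},
              |MvPolynomial.coeff (m : Fin N →₀ ℕ) p| * M' ^ D :=
            Finset.sum_le_sum fun m _ => hterm m
        _ = Csum * M' ^ D := by
            rw [← Finset.sum_mul, hCsum,
              Finset.sum_coe_sort p.support fun m => |MvPolynomial.coeff m p|]
    exact gamma2_le_of_bounds _ B C hprod (by positivity) hBrow hCcol
  -- limit M' → M⁺
  have cont : Filter.Tendsto (fun M' : ℝ => Csum * M' ^ D) (nhdsWithin M (Set.Ioi M))
      (nhds (Csum * M ^ D)) :=
    ((continuous_const.mul (continuous_pow D)).tendsto M).mono_left nhdsWithin_le_nhds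
  exact ge_of_tendsto cont (Filter.eventually_of_mem self_mem_nhdsWithin fun M' hM' => key M' hM')


end
end

section
/- Let p be a real polynomial in n variables of degree at most d (with d ≥ 1) such that |p(x)| ≤ 1 for all x ∈ [0,1]^n. Then the absolute value of every coefficient of p is at most (2d)^{3d}, and the sum of the absolute values of all coefficients of p is at most (2(n+d))^{3d}. -/
namespace Stmt19Aux

open Polynomial Finset


variable (h : ℝ)

/-- forward difference operator on polynomials -/
noncomputable def dOp (q : ℝ[X]) : ℝ[X] := q.comp (X + C h) - q

/-- falling-factorial-type product with step h -/
noncomputable def ffp (b : ℕ) : ℝ[X] := ∏ j ∈ Finset.range b, (X - C (j * h))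

lemma dOp_zero : dOp h 0 = 0 := by simp [dOp]

lemma eval_dOp (q : ℝ[X]) (x : ℝ) : (dOp h q).eval x = q.eval (x + h) - q.eval x := by
  simp [dOp, eval_comp]

lemma eval_dOp_iter (q : ℝ[X]) (b : ℕ) :
    (fun x => ((dOp h)^[b] q).eval x) = (fwdDiff h)^[b] (fun x => q.eval x) := by
  induction b with
  | zero => simp
  | succ b IH =>
      rw [Function.iterate_succ_apply', Function.iterate_succ_apply']
      funext x
      rw [eval_dOp, fwdDiff, ← IH]

lemma eval_dOp_iter_eq_sum (q : ℝ[X]) (b : ℕ) (x : ℝ) :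
    ((dOp h)^[b] q).eval x
      = ∑ k ∈ Finset.range (b + 1),
          ((-1 : ℝ) ^ (b - k) * (b.choose k)) * q.eval (x + k * h) := by
  have := congrFun (eval_dOp_iter h q b) x
  rw [this, fwdDiff_iter_eq_sum_shift]
  refine Finset.sum_congr rfl fun k _ => ?_
  have : (k • h) = (k : ℝ) * h := by simp [nsmul_eq_mul]
  rw [this, zsmul_eq_mul]
  push_cast
  ring

lemma dOp_of_natDegree_eq_zero (q : ℝ[X]) (hq : q.natDegree = 0) : dOp h q = 0 := by
  obtain ⟨a, rfl⟩ := Polynomial.natDegree_eq_zero.mp hq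
  simp [dOp]

lemma natDegree_dOp_le (q : ℝ[X]) : (dOp h q).natDegree ≤ q.natDegree - 1 := by
  rcases Nat.eq_zero_or_pos q.natDegree with h0 | h0
  · rw [dOp_of_natDegree_eq_zero h q h0]; simp
  · have hq0 : q ≠ 0 := fun hc => by simp [hc] at h0
    have hcomp : (q.comp (X + C h)).natDegree = q.natDegree := by
      rw [natDegree_comp, natDegree_X_add_C, mul_one]
    have hcomp0 : q.comp (X + C h) ≠ 0 := fun hc => by
      rw [hc, natDegree_zero] at hcomp; omega
    have hlc : (q.comp (X + C h)).leadingCoeff = q.leadingCoeff := by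
      rw [leadingCoeff_comp (by rw [natDegree_X_add_C]; norm_num)]
      simp [leadingCoeff_X_add_C]
    have hdeg : (q.comp (X + C h)).degree = q.degree := by
      rw [degree_eq_natDegree hcomp0, degree_eq_natDegree hq0, hcomp]
    have := Polynomial.degree_sub_lt hdeg hcomp0 hlc
    rcases eq_or_ne (dOp h q) 0 with hz | hz
    · rw [hz]; simp
    · have : (dOp h q).degree < q.degree := by rw [← hdeg]; exact this
      have := Polynomial.natDegree_lt_natDegree hz this
      omega

lemma natDegree_dOp_iter_le (q : ℝ[X]) (b : ℕ) :
    ((dOp h)^[b] q).natDegree ≤ q.natDegree - b := by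
  induction b with
  | zero => simp
  | succ b IH =>
      rw [Function.iterate_succ_apply']
      calc ((dOp h) (((dOp h)^[b]) q)).natDegree ≤ ((dOp h)^[b] q).natDegree - 1 :=
            natDegree_dOp_le h _
        _ ≤ q.natDegree - (b + 1) := by omega

lemma dOp_iter_eq_zero (q : ℝ[X]) (b : ℕ) (hb : q.natDegree < b) : (dOp h)^[b] q = 0 := by
  obtain ⟨r, rfl⟩ : ∃ r, b = r + (q.natDegree + 1) := ⟨b - (q.natDegree + 1), by omega⟩
  rw [Function.iterate_add_apply]
  have h1 : (dOp h)^[q.natDegree + 1] q = 0 := by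
    rw [Function.iterate_succ_apply']
    apply dOp_of_natDegree_eq_zero
    have := natDegree_dOp_iter_le h q q.natDegree
    omega
  rw [h1, Function.iterate_fixed (dOp_zero h)]


lemma ffp_zero : ffp h 0 = 1 := by simp [ffp]

lemma eval_ffp_zero (b : ℕ) (hb : b ≠ 0) : (ffp h b).eval 0 = 0 := by
  rw [ffp, eval_prod]
  apply Finset.prod_eq_zero (i := 0) (Finset.mem_range.mpr (by omega))
  simp

lemma ffp_comp (b : ℕ) : (ffp h (b + 1)).comp (X + C h) = (X + C h) * ffp h b := by
  rw [ffp, Polynomial.prod_comp]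
  have e1 : ∀ j : ℕ, ((X : ℝ[X]) - C (j * h)).comp (X + C h) = X + C h - C (j * h) := by
    intro j; simp [sub_comp]
  simp only [e1]
  rw [Finset.prod_range_succ']
  have e2 : ∀ j : ℕ, (X : ℝ[X]) + C h - C ((j + 1 : ℕ) * h) = X - C (j * h) := by
    intro j
    have : ((j + 1 : ℕ) : ℝ) * h = (j : ℝ) * h + h := by push_cast; ring
    rw [this, C_add]; ring
  simp only [e2]
  have e3 : (X : ℝ[X]) + C h - C ((0 : ℕ) * h) = X + C h := by
    simp
  rw [e3, mul_comm, ffp]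

lemma dOp_ffp (b : ℕ) : dOp h (ffp h (b + 1)) = C ((b + 1) * h) * ffp h b := by
  rw [dOp, ffp_comp]
  have : ffp h (b + 1) = ffp h b * (X - C (b * h)) := by
    rw [ffp, ffp, Finset.prod_range_succ]
  rw [this]
  have : ((b : ℝ) + 1) * h = h + (b : ℝ) * h := by ring
  rw [this, C_add]
  ring

lemma dOp_ffp_zero : dOp h (ffp h 0) = 0 := by
  simp [ffp, dOp]

lemma dOp_smul (a : ℝ) (q : ℝ[X]) : dOp h (a • q) = a • dOp h q := by
  simp [dOp, smul_comp, smul_sub]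

lemma dOp_sum {α : Type*} (s : Finset α) (f : α → ℝ[X]) :
    dOp h (∑ i ∈ s, f i) = ∑ i ∈ s, dOp h (f i) := by
  classical
  induction s using Finset.induction with
  | empty => simp [dOp]
  | insert _ _ hx ih =>
      rw [Finset.sum_insert hx, Finset.sum_insert hx, ← ih]
      simp [dOp, add_comp]; ring

lemma dOp_sub (q r : ℝ[X]) : dOp h (q - r) = dOp h q - dOp h r := by
  simp [dOp, sub_comp]; ring

lemma const_of_dOp_eq_zero (hh : h ≠ 0) (u : ℝ[X]) (hu : dOp h u = 0) :
    u = C (u.eval 0) := by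
  have key : ∀ x : ℝ, u.eval (x + h) = u.eval x := by
    intro x
    have := congrArg (fun q => Polynomial.eval x q) hu
    simpa [dOp, eval_comp, sub_eq_zero] using this
  have hk : ∀ k : ℕ, u.eval (k * h) = u.eval 0 := by
    intro k
    induction k with
    | zero => simp
    | succ k ih =>
        have : ((k + 1 : ℕ) : ℝ) * h = (k : ℝ) * h + h := by push_cast; ring
        rw [this, key, ih]
  have hz : u - C (u.eval 0) = 0 := by
    apply Polynomial.eq_zero_of_infinite_isRoot
    apply Set.infinite_of_injective_forall_mem
      (f := fun k : ℕ => (k : ℝ) * h)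
    · intro a b hab
      have := mul_right_cancel₀ hh hab
      exact_mod_cast this
    · intro k
      simp only [Set.mem_setOf_eq, IsRoot.def, eval_sub, eval_C, hk k, sub_self]
  exact sub_eq_zero.mp hz

theorem newton (hh : h ≠ 0) : ∀ (D : ℕ) (q : ℝ[X]), q.natDegree ≤ D →
    q = ∑ b ∈ Finset.range (D + 1),
      ((((dOp h)^[b] q).eval 0) / (b.factorial * h ^ b)) • ffp h b := by
  intro D
  induction D with
  | zero =>
      intro q hq
      obtain ⟨a, rfl⟩ := Polynomial.natDegree_eq_zero.mp (Nat.le_zero.mp hq)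
      simp [ffp_zero, smul_eq_C_mul]
  | succ D IH =>
      intro q hq
      set r := dOp h q with hr
      have hrD : r.natDegree ≤ D := by
        have := natDegree_dOp_le h q; rw [← hr] at this; omega
      have IHr := IH r hrD
      set s := ∑ b ∈ Finset.range (D + 2),
        ((((dOp h)^[b] q).eval 0) / (b.factorial * h ^ b)) • ffp h b with hs
      have hds : dOp h s = r := by
        rw [hs, dOp_sum]
        have e1 : ∀ b ∈ Finset.range (D + 2),
            dOp h (((((dOp h)^[b] q).eval 0) / (b.factorial * h ^ b)) • ffp h b)
            = ((((dOp h)^[b] q).eval 0) / (b.factorial * h ^ b)) • dOp h (ffp h b) :=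
          fun b _ => dOp_smul h _ _
        rw [Finset.sum_congr rfl e1, Finset.sum_range_succ']
        have e2 : dOp h (ffp h 0) = 0 := dOp_ffp_zero h
        rw [e2, smul_zero, add_zero]
        conv_rhs => rw [IHr]
        refine Finset.sum_congr rfl fun b _ => ?_
        rw [dOp_ffp]
        have e3 : (dOp h)^[b] r = (dOp h)^[b + 1] q := by
          rw [hr, ← Function.iterate_succ_apply]
        rw [← e3]
        rw [smul_eq_C_mul, smul_eq_C_mul, ← mul_assoc, ← C_mul]
        congr 2
        have hb1 : ((b + 1 : ℕ) : ℝ) ≠ 0 := by positivity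
        have hfac : ((b.factorial : ℝ)) ≠ 0 := by
          exact_mod_cast Nat.factorial_ne_zero b
        have hfac1 : (((b+1).factorial : ℝ)) ≠ 0 := by
          exact_mod_cast Nat.factorial_ne_zero (b+1)
        have hpow : h ^ b ≠ 0 := pow_ne_zero _ hh
        have : ((b+1).factorial : ℝ) = (b + 1 : ℕ) * b.factorial := by
          rw [Nat.factorial_succ]; push_cast; ring
        rw [this]
        field_simp
        push_cast
        ring
      have h0 : s.eval 0 = q.eval 0 := by
        rw [hs, eval_finset_sum, Finset.sum_range_succ']
        have e4 : ∀ b ∈ Finset.range (D + 1),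
            (((((dOp h)^[b+1] q).eval 0) / ((b+1).factorial * h ^ (b+1))) • ffp h (b+1)).eval 0
              = 0 := by
          intro b _
          rw [eval_smul, eval_ffp_zero h (b+1) (by omega), smul_zero]
        rw [Finset.sum_congr rfl e4]
        simp [ffp_zero]
      have hzero : dOp h (q - s) = 0 := by
        rw [dOp_sub, hds, hr, sub_self]
      have := const_of_dOp_eq_zero h hh _ hzero
      have heval : (q - s).eval 0 = 0 := by
        rw [eval_sub, h0, sub_self]
      rw [heval] at this
      have : q - s = 0 := by rw [this, C_0]
      have := sub_eq_zero.mp this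
      exact this



variable {σ : Type*}

noncomputable def L1 (q : MvPolynomial σ ℝ) : ℝ := ∑ m ∈ q.support, |MvPolynomial.coeff m q|

lemma L1_nonneg (q : MvPolynomial σ ℝ) : 0 ≤ L1 q :=
  Finset.sum_nonneg fun _ _ => abs_nonneg _

lemma abs_coeff_le_L1 (q : MvPolynomial σ ℝ) (m : σ →₀ ℕ) : |MvPolynomial.coeff m q| ≤ L1 q := by
  by_cases hm : m ∈ q.support
  · exact Finset.single_le_sum (f := fun m => |MvPolynomial.coeff m q|) (fun _ _ => abs_nonneg _) hm
  · rw [MvPolynomial.notMem_support_iff.mp hm, abs_zero]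
    exact L1_nonneg q

lemma L1_zero : L1 (0 : MvPolynomial σ ℝ) = 0 := by simp [L1]

lemma L1_eq_sum_superset (q : MvPolynomial σ ℝ) (s : Finset (σ →₀ ℕ)) (hs : q.support ⊆ s) :
    L1 q = ∑ m ∈ s, |MvPolynomial.coeff m q| := by
  refine Finset.sum_subset hs fun m _ hm => ?_
  rw [MvPolynomial.notMem_support_iff.mp hm, abs_zero]

lemma L1_add_le (p q : MvPolynomial σ ℝ) : L1 (p + q) ≤ L1 p + L1 q := by
  classical
  rw [L1_eq_sum_superset (p+q) (p.support ∪ q.support) MvPolynomial.support_add,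
    L1_eq_sum_superset p (p.support ∪ q.support) Finset.subset_union_left,
    L1_eq_sum_superset q (p.support ∪ q.support) Finset.subset_union_right,
    ← Finset.sum_add_distrib]
  refine Finset.sum_le_sum fun m _ => ?_
  rw [MvPolynomial.coeff_add]
  exact abs_add_le _ _

lemma L1_sum_le {α : Type*} (s : Finset α) (f : α → MvPolynomial σ ℝ) :
    L1 (∑ i ∈ s, f i) ≤ ∑ i ∈ s, L1 (f i) := by
  classical
  induction s using Finset.induction with
  | empty => simp [L1_zero]
  | insert _ _ hx ih =>
      rw [Finset.sum_insert hx, Finset.sum_insert hx]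
      exact le_trans (L1_add_le _ _) (by linarith)

lemma L1_monomial_le (m : σ →₀ ℕ) (a : ℝ) : L1 (MvPolynomial.monomial m a) ≤ |a| := by
  classical
  rcases eq_or_ne a 0 with rfl | ha
  · simp [L1_zero]
  · rw [L1, MvPolynomial.support_monomial, if_neg ha]
    simp

lemma L1_mul_monomial_le (p : MvPolynomial σ ℝ) (s : σ →₀ ℕ) (a : ℝ) :
    L1 (p * MvPolynomial.monomial s a) ≤ L1 p * |a| := by
  classical
  conv_lhs => rw [MvPolynomial.as_sum p, Finset.sum_mul]
  refine le_trans (L1_sum_le _ _) ?_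
  rw [L1, Finset.sum_mul]
  refine Finset.sum_le_sum fun m _ => ?_
  rw [MvPolynomial.monomial_mul]
  exact le_trans (L1_monomial_le _ _) (by rw [abs_mul])

lemma L1_mul_le (p q : MvPolynomial σ ℝ) : L1 (p * q) ≤ L1 p * L1 q := by
  classical
  conv_lhs => rw [MvPolynomial.as_sum q, Finset.mul_sum]
  refine le_trans (L1_sum_le _ _) ?_
  refine le_trans (Finset.sum_le_sum fun m (_ : m ∈ q.support) => L1_mul_monomial_le p m _) ?_
  rw [← Finset.mul_sum]
  simp only [L1]
  exact le_rfl

lemma L1_one : L1 (1 : MvPolynomial σ ℝ) ≤ 1 := by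
  classical
  have : (1 : MvPolynomial σ ℝ) = MvPolynomial.monomial 0 1 := by simp
  rw [this]
  simpa using L1_monomial_le (0 : σ →₀ ℕ) (1:ℝ)

lemma L1_prod_le {α : Type*} (s : Finset α) (f : α → MvPolynomial σ ℝ) (g : α → ℝ)
    (hg : ∀ i ∈ s, L1 (f i) ≤ g i) (hg0 : ∀ i ∈ s, 0 ≤ g i) :
    L1 (∏ i ∈ s, f i) ≤ ∏ i ∈ s, g i := by
  classical
  induction s using Finset.induction with
  | empty => simpa using L1_one
  | @insert x s hx ih =>
      rw [Finset.prod_insert hx, Finset.prod_insert hx]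
      refine le_trans (L1_mul_le _ _) ?_
      have h1 := hg x (Finset.mem_insert_self x s)
      have h2 := ih (fun i hi => hg i (Finset.mem_insert_of_mem hi))
        (fun i hi => hg0 i (Finset.mem_insert_of_mem hi))
      have h3 : (0:ℝ) ≤ ∏ i ∈ s, g i := Finset.prod_nonneg fun i hi => hg0 i (Finset.mem_insert_of_mem hi)
      exact mul_le_mul h1 h2 (L1_nonneg _) (hg0 x (Finset.mem_insert_self x s))

lemma L1_smul_le (r : ℝ) (p : MvPolynomial σ ℝ) : L1 (r • p) ≤ |r| * L1 p := by
  classical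
  rw [MvPolynomial.smul_eq_C_mul]
  refine le_trans (L1_mul_le _ _) ?_
  have : L1 (MvPolynomial.C r : MvPolynomial σ ℝ) ≤ |r| := by
    rw [MvPolynomial.C_apply]; exact L1_monomial_le _ _
  exact mul_le_mul_of_nonneg_right this (L1_nonneg p)

lemma L1_X_sub_C_le (i : σ) (c : ℝ) : L1 ((MvPolynomial.X i : MvPolynomial σ ℝ) - MvPolynomial.C c) ≤ 1 + |c| := by
  classical
  have hX : (MvPolynomial.X i : MvPolynomial σ ℝ) = MvPolynomial.monomial (Finsupp.single i 1) 1 := by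
    rw [← MvPolynomial.X_pow_eq_monomial, pow_one]
  have hC : -(MvPolynomial.C c : MvPolynomial σ ℝ) = MvPolynomial.monomial 0 (-c) := by
    rw [MvPolynomial.C_apply, ← map_neg (MvPolynomial.monomial (0 : σ →₀ ℕ))]
  rw [sub_eq_add_neg, hX, hC]
  refine le_trans (L1_add_le _ _) ?_
  have h1 := L1_monomial_le (Finsupp.single i 1) (1:ℝ)
  have h2 := L1_monomial_le (0 : σ →₀ ℕ) (-c)
  simp only [abs_one, abs_neg] at h1 h2
  linarith


/-! ### univariate Newton for monomials -/

noncomputable def duniv (h : ℝ) (b g : ℕ) : ℝ :=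
  ∑ k ∈ Finset.range (b + 1), ((-1 : ℝ) ^ (b - k) * ((b.choose k : ℕ) : ℝ)) * ((k : ℝ) * h) ^ g

lemma duniv_eq (h : ℝ) (b g : ℕ) :
    duniv h b g = ((dOp h)^[b] ((X : ℝ[X]) ^ g)).eval 0 := by
  rw [eval_dOp_iter_eq_sum]
  unfold duniv
  refine Finset.sum_congr rfl fun k _ => ?_
  rw [eval_pow, eval_X, zero_add]

lemma duniv_eq_zero (h : ℝ) (b g : ℕ) (hgb : g < b) : duniv h b g = 0 := by
  rw [duniv_eq, dOp_iter_eq_zero h _ b (by simpa [natDegree_X_pow] using hgb), eval_zero]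

lemma newton_monomial (h : ℝ) (hh : h ≠ 0) (D g : ℕ) (hg : g ≤ D) :
    (X : ℝ[X]) ^ g = ∑ b ∈ Finset.range (D + 1),
      (duniv h b g / (b.factorial * h ^ b)) • ffp h b := by
  simp only [duniv_eq h]
  exact newton h hh D _ (by simpa [natDegree_X_pow] using hg)

/-! ### multivariate setup -/

section MV
open MvPolynomial

variable {n : ℕ}

noncomputable def Nb (h : ℝ) (b : Fin n → ℕ) : MvPolynomial (Fin n) ℝ :=
  ∏ i, ∏ j ∈ Finset.range (b i), (MvPolynomial.X i - MvPolynomial.C ((j : ℝ) * h))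

noncomputable def wB (b γ : Fin n → ℕ) : ℝ :=
  ∏ i, ((-1 : ℝ) ^ (b i - γ i) * (((b i).choose (γ i) : ℕ) : ℝ))

noncomputable def Aq (h : ℝ) (b : Fin n → ℕ) (q : MvPolynomial (Fin n) ℝ) : ℝ :=
  ∑ γ ∈ Fintype.piFinset (fun i => Finset.range (b i + 1)),
    wB b γ * MvPolynomial.eval (fun i => (γ i : ℝ) * h) q

noncomputable def cB (h : ℝ) (b : Fin n → ℕ) : ℝ := ∏ i, ((b i).factorial * h ^ (b i))

lemma sum_fin (m : Fin n →₀ ℕ) : m.sum (fun _ e => e) = ∑ i, m i :=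
  Finsupp.sum_fintype _ _ (fun _ => rfl)

lemma Aq_monomial (h : ℝ) (b : Fin n → ℕ) (m : Fin n →₀ ℕ) (c : ℝ) :
    Aq h b (MvPolynomial.monomial m c) = c * ∏ i, duniv h (b i) (m i) := by
  unfold Aq wB
  have he : ∀ γ : Fin n → ℕ,
      MvPolynomial.eval (fun i => (γ i : ℝ) * h) (MvPolynomial.monomial m c)
        = c * ∏ i, ((γ i : ℝ) * h) ^ (m i) := by
    intro γ
    rw [MvPolynomial.eval_monomial]
    congr 1
    exact Finsupp.prod_fintype _ _ (fun i => pow_zero _)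
  simp only [he]
  have hre : ∀ γ : Fin n → ℕ,
      (∏ i, ((-1:ℝ) ^ (b i - γ i) * (((b i).choose (γ i) : ℕ) : ℝ)))
          * (c * ∏ i, ((γ i : ℝ) * h) ^ (m i))
      = c * ∏ i, (((-1:ℝ) ^ (b i - γ i) * (((b i).choose (γ i) : ℕ) : ℝ))
          * ((γ i : ℝ) * h) ^ (m i)) := by
    intro γ
    conv_rhs => rw [Finset.prod_mul_distrib]
    exact mul_left_comm _ _ _
  simp only [hre]
  rw [← Finset.mul_sum, ← Finset.prod_univ_sum
    (fun i => Finset.range (b i + 1))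
    (fun i k => ((-1:ℝ) ^ (b i - k) * (((b i).choose k : ℕ) : ℝ)) * ((k : ℝ) * h) ^ (m i))]
  rfl

lemma Aq_sum {α : Type*} (h : ℝ) (b : Fin n → ℕ) (s : Finset α)
    (f : α → MvPolynomial (Fin n) ℝ) :
    Aq h b (∑ i ∈ s, f i) = ∑ i ∈ s, Aq h b (f i) := by
  unfold Aq
  simp only [map_sum, Finset.mul_sum]
  exact Finset.sum_comm

lemma Aq_eq_zero (h : ℝ) (b : Fin n → ℕ) (q : MvPolynomial (Fin n) ℝ)
    (hq : q.totalDegree < ∑ i, b i) : Aq h b q = 0 := by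
  conv_lhs => rw [MvPolynomial.as_sum q]
  rw [Aq_sum]
  refine Finset.sum_eq_zero fun m hm => ?_
  rw [Aq_monomial]
  have hmle : ∑ i, m i ≤ q.totalDegree := by
    rw [← sum_fin]; exact MvPolynomial.le_totalDegree hm
  have hex : ∃ i, m i < b i := by
    by_contra hc
    push_neg at hc
    have : ∑ i, b i ≤ ∑ i, m i := Finset.sum_le_sum fun i _ => hc i
    omega
  obtain ⟨i, hi⟩ := hex
  rw [Finset.prod_eq_zero (Finset.mem_univ i) (duniv_eq_zero h _ _ hi), mul_zero]

lemma key_monomial (h : ℝ) (hh : h ≠ 0) (d : ℕ) (m : Fin n →₀ ℕ) (c : ℝ)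
    (hmd : ∀ i, m i ≤ d) :
    ∑ b ∈ Fintype.piFinset (fun _ : Fin n => Finset.range (d+1)),
      (Aq h b (MvPolynomial.monomial m c) / cB h b) • Nb h b
    = MvPolynomial.monomial m c := by
  have hterm : ∀ b : Fin n → ℕ,
      (Aq h b (MvPolynomial.monomial m c) / cB h b) • Nb h b
      = MvPolynomial.C c * ∏ i,
          (MvPolynomial.C (duniv h (b i) (m i) / ((b i).factorial * h ^ (b i)))
            * ∏ j ∈ Finset.range (b i), (MvPolynomial.X i - MvPolynomial.C ((j:ℝ) * h))) := by
    intro b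
    rw [Aq_monomial, cB, MvPolynomial.smul_eq_C_mul, Nb]
    have harith : c * (∏ i, duniv h (b i) (m i)) / (∏ i, (((b i).factorial : ℝ) * h ^ (b i)))
        = c * ∏ i, (duniv h (b i) (m i) / (((b i).factorial : ℝ) * h ^ (b i))) := by
      rw [Finset.prod_div_distrib, mul_div_assoc]
    rw [harith, map_mul, map_prod, Finset.prod_mul_distrib, mul_assoc]
  simp only [hterm]
  rw [← Finset.mul_sum, ← Finset.prod_univ_sum
    (fun _ : Fin n => Finset.range (d+1))
    (fun i k => MvPolynomial.C (duniv h k (m i) / ((k.factorial : ℝ) * h ^ k))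
      * ∏ j ∈ Finset.range k, (MvPolynomial.X i - MvPolynomial.C ((j:ℝ) * h)))]
  have hvar : ∀ i : Fin n, ∑ k ∈ Finset.range (d+1),
      (MvPolynomial.C (duniv h k (m i) / ((k.factorial : ℝ) * h ^ k))
        * ∏ j ∈ Finset.range k, (MvPolynomial.X i - MvPolynomial.C ((j:ℝ) * h)))
      = (MvPolynomial.X i : MvPolynomial (Fin n) ℝ) ^ (m i) := by
    intro i
    have hone := newton_monomial h hh d (m i) (hmd i)
    have happ := congrArg (Polynomial.aeval (MvPolynomial.X i : MvPolynomial (Fin n) ℝ)) hone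
    rw [map_pow, Polynomial.aeval_X, map_sum] at happ
    rw [happ]
    refine Finset.sum_congr rfl fun k _ => ?_
    rw [map_smul, MvPolynomial.smul_eq_C_mul]
    congr 1
    rw [ffp, map_prod]
    refine Finset.prod_congr rfl fun j _ => ?_
    rw [map_sub, Polynomial.aeval_X, Polynomial.aeval_C, MvPolynomial.algebraMap_eq]
  simp only [hvar]
  rw [MvPolynomial.monomial_eq]
  congr 1
  exact (Finsupp.prod_fintype _ _ (fun i => pow_zero _)).symm

theorem key (h : ℝ) (hh : h ≠ 0) (d : ℕ) (q : MvPolynomial (Fin n) ℝ)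
    (hq : q.totalDegree ≤ d) :
    q = ∑ b ∈ Fintype.piFinset (fun _ : Fin n => Finset.range (d + 1)),
        (Aq h b q / cB h b) • Nb h b := by
  have hswap : ∀ b : Fin n → ℕ, (Aq h b q / cB h b) • Nb h b
      = ∑ m ∈ q.support,
          (Aq h b (MvPolynomial.monomial m (MvPolynomial.coeff m q)) / cB h b) • Nb h b := by
    intro b
    conv_lhs => rw [MvPolynomial.as_sum q]
    rw [Aq_sum, Finset.sum_div, Finset.sum_smul]
  conv_lhs => rw [MvPolynomial.as_sum q]
  rw [Finset.sum_congr rfl (fun b _ => hswap b), Finset.sum_comm]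
  refine Finset.sum_congr rfl fun m hm => ?_
  have hmd : ∀ i, m i ≤ d := by
    intro i
    have h1 : m i ≤ ∑ j, m j :=
      Finset.single_le_sum (f := fun j => m j) (fun _ _ => Nat.zero_le _) (Finset.mem_univ i)
    have h2 : ∑ j, m j ≤ q.totalDegree := by
      rw [← sum_fin]; exact MvPolynomial.le_totalDegree hm
    omega
  exact (key_monomial h hh d m _ hmd).symm

lemma coeff_formula (h : ℝ) (hh : h ≠ 0) (d : ℕ) (q : MvPolynomial (Fin n) ℝ)
    (hq : q.totalDegree ≤ d) (m : Fin n →₀ ℕ) :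
    MvPolynomial.coeff m q
      = ∑ b ∈ Fintype.piFinset (fun _ : Fin n => Finset.range (d + 1)),
        (Aq h b q / cB h b) * MvPolynomial.coeff m (Nb h b) := by
  conv_lhs => rw [key h hh d q hq]
  rw [MvPolynomial.coeff_sum]
  refine Finset.sum_congr rfl fun b _ => ?_
  rw [MvPolynomial.coeff_smul, smul_eq_mul]

lemma abs_Aq_le (d : ℕ) (hd : 1 ≤ d) (q : MvPolynomial (Fin n) ℝ)
    (hbound : ∀ x : Fin n → ℝ, (∀ i, x i ∈ Set.Icc (0:ℝ) 1) → |MvPolynomial.eval x q| ≤ 1)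
    (b : Fin n → ℕ) (hb : ∀ i, b i ≤ d) :
    |Aq (1/(d:ℝ)) b q| ≤ 2 ^ (∑ i, b i) := by
  have hd0 : (0:ℝ) < (d:ℝ) := by exact_mod_cast hd
  refine le_trans (Finset.abs_sum_le_sum_abs _ _) ?_
  have hterm : ∀ γ ∈ Fintype.piFinset (fun i => Finset.range (b i + 1)),
      |wB b γ * MvPolynomial.eval (fun i => (γ i : ℝ) * (1/(d:ℝ))) q|
        ≤ ∏ i, (((b i).choose (γ i) : ℕ) : ℝ) := by
    intro γ hγ
    have hγle : ∀ i, γ i ≤ b i := by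
      intro i
      exact Nat.lt_succ_iff.mp (Finset.mem_range.mp ((Fintype.mem_piFinset.mp hγ) i))
    have h1 : |wB b γ| = ∏ i, (((b i).choose (γ i) : ℕ) : ℝ) := by
      rw [wB, Finset.abs_prod]
      refine Finset.prod_congr rfl fun i _ => ?_
      rw [abs_mul, abs_pow, abs_neg, abs_one, one_pow, one_mul, Nat.abs_cast]
    have h2 : |MvPolynomial.eval (fun i => (γ i : ℝ) * (1/(d:ℝ))) q| ≤ 1 := by
      apply hbound
      intro i
      constructor
      · positivity
      · have hle : (γ i : ℝ) ≤ (d:ℝ) := by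
          exact_mod_cast le_trans (hγle i) (hb i)
        calc (γ i:ℝ) * (1/(d:ℝ)) ≤ (d:ℝ) * (1/(d:ℝ)) :=
              mul_le_mul_of_nonneg_right hle (by positivity)
          _ = 1 := by field_simp
    calc |wB b γ * MvPolynomial.eval (fun i => (γ i : ℝ) * (1/(d:ℝ))) q|
        = |wB b γ| * |MvPolynomial.eval (fun i => (γ i : ℝ) * (1/(d:ℝ))) q| := abs_mul _ _
      _ ≤ |wB b γ| * 1 := mul_le_mul_of_nonneg_left h2 (abs_nonneg _)
      _ = ∏ i, (((b i).choose (γ i) : ℕ) : ℝ) := by rw [mul_one, h1]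
  refine le_trans (Finset.sum_le_sum hterm) ?_
  rw [← Finset.prod_univ_sum (fun i => Finset.range (b i + 1))
      (fun i k => (((b i).choose k : ℕ) : ℝ))]
  have hch : ∀ i : Fin n, ∑ k ∈ Finset.range (b i + 1), (((b i).choose k : ℕ) : ℝ)
      = 2 ^ (b i) := by
    intro i
    rw [← Nat.cast_sum, Nat.sum_range_choose]
    push_cast; ring
  rw [Finset.prod_congr rfl fun i _ => hch i, Finset.prod_pow_eq_pow_sum]

lemma cB_pos (d : ℕ) (hd : 1 ≤ d) (b : Fin n → ℕ) : 0 < cB (1/(d:ℝ)) b := by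
  have hd0 : (0:ℝ) < (d:ℝ) := by exact_mod_cast hd
  refine Finset.prod_pos fun i _ => ?_
  have h1 : (0:ℝ) < ((b i).factorial : ℝ) := by exact_mod_cast (b i).factorial_pos
  positivity

lemma inv_cB_le (d : ℕ) (hd : 1 ≤ d) (b : Fin n → ℕ) :
    1 / cB (1/(d:ℝ)) b ≤ (d:ℝ) ^ (∑ i, b i) := by
  have hd0 : (0:ℝ) < (d:ℝ) := by exact_mod_cast hd
  have hlow : ((1:ℝ)/(d:ℝ)) ^ (∑ i, b i) ≤ cB (1/(d:ℝ)) b := by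
    rw [cB, ← Finset.prod_pow_eq_pow_sum]
    refine Finset.prod_le_prod (fun i _ => by positivity) (fun i _ => ?_)
    have h1 : (1:ℝ) ≤ ((b i).factorial : ℝ) := by
      exact_mod_cast (b i).factorial_pos
    have h2 : (0:ℝ) < ((1:ℝ)/(d:ℝ)) ^ (b i) := by positivity
    nlinarith
  have h2 : (0:ℝ) < ((1:ℝ)/(d:ℝ)) ^ (∑ i, b i) := by positivity
  calc 1 / cB (1/(d:ℝ)) b ≤ 1 / (((1:ℝ)/(d:ℝ)) ^ (∑ i, b i)) :=
        one_div_le_one_div_of_le h2 hlow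
    _ = (d:ℝ) ^ (∑ i, b i) := by
        rw [one_div, ← inv_pow, one_div, inv_inv]

lemma L1_Nb_le (d : ℕ) (hd : 1 ≤ d) (b : Fin n → ℕ) (hb : ∀ i, b i ≤ d) :
    L1 (Nb (1/(d:ℝ)) b) ≤ 2 ^ (∑ i, b i) := by
  have hd0 : (0:ℝ) < (d:ℝ) := by exact_mod_cast hd
  rw [Nb, ← Finset.prod_pow_eq_pow_sum]
  refine L1_prod_le _ _ (fun i => (2:ℝ) ^ (b i)) (fun i _ => ?_) (fun i _ => by positivity)
  have hconst : (2:ℝ)^(b i) = ∏ _j ∈ Finset.range (b i), (2:ℝ) := by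
    rw [Finset.prod_const, Finset.card_range]
  show L1 _ ≤ (2:ℝ) ^ (b i)
  rw [hconst]
  refine L1_prod_le _ _ (fun _ => (2:ℝ)) (fun j hj => ?_) (fun _ _ => by norm_num)
  refine le_trans (L1_X_sub_C_le _ _) ?_
  have hj' : (j:ℝ) ≤ (d:ℝ) := by
    have : j < b i := Finset.mem_range.mp hj
    exact_mod_cast le_trans (Nat.le_of_lt this) (hb i)
  have habs : |(j:ℝ) * (1/(d:ℝ))| ≤ 1 := by
    rw [abs_of_nonneg (by positivity)]
    calc (j:ℝ) * (1/(d:ℝ)) ≤ (d:ℝ) * (1/(d:ℝ)) := mul_le_mul_of_nonneg_right hj' (by positivity)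
      _ = 1 := by field_simp
  linarith

lemma geom_le (c D : ℕ) : ∑ j ∈ Finset.range (D+1), (c+1)^j ≤ (c+2)^D := by
  have step : ∀ j ∈ Finset.range (D+1), (c+1)^j ≤ (c+1)^j * 1^(D-j) * (D.choose j) := by
    intro j hj
    have hjD : j ≤ D := Nat.lt_succ_iff.mp (Finset.mem_range.mp hj)
    have hpos : 0 < D.choose j := Nat.choose_pos hjD
    calc (c+1)^j = (c+1)^j * 1^(D-j) * 1 := by ring
      _ ≤ (c+1)^j * 1^(D-j) * (D.choose j) := Nat.mul_le_mul_left _ hpos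
  calc ∑ j ∈ Finset.range (D+1), (c+1)^j
      ≤ ∑ j ∈ Finset.range (D+1), (c+1)^j * 1^(D-j) * (D.choose j) := Finset.sum_le_sum step
    _ = (c+1+1)^D := (add_pow (c+1) 1 D).symm
    _ = (c+2)^D := by norm_num

lemma geom_le' (c D : ℕ) : ∑ j ∈ Finset.range (D+1), (c+1)^(D-j) ≤ (c+2)^D := by
  have hrefl := Finset.sum_range_reflect (fun j => (c+1)^j) (D+1)
  simp only [Nat.add_sub_cancel] at hrefl
  calc ∑ j ∈ Finset.range (D+1), (c+1)^(D-j)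
      = ∑ j ∈ Finset.range (D+1), (c+1)^j := hrefl
    _ ≤ (c+2)^D := geom_le c D

open Classical in
noncomputable def TT (I : Finset (Fin n)) (D : ℕ) : Finset (Fin n → ℕ) :=
  (Fintype.piFinset fun _ => Finset.range (D+1)).filter
    (fun δ => (∀ i, i ∉ I → δ i = 0) ∧ ∑ i, δ i ≤ D)

lemma mem_TT {I : Finset (Fin n)} {D : ℕ} {δ : Fin n → ℕ} :
    δ ∈ TT I D ↔ (∀ i, δ i ≤ D) ∧ (∀ i, i ∉ I → δ i = 0) ∧ ∑ i, δ i ≤ D := by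
  classical
  simp only [TT, Finset.mem_filter, Fintype.mem_piFinset, Finset.mem_range, Nat.lt_succ_iff]

lemma TT_card_le (I : Finset (Fin n)) : ∀ (D : ℕ), (TT I D).card ≤ (I.card + 1) ^ D := by
  classical
  induction I using Finset.induction with
  | empty =>
      intro D
      have hsub : TT (∅ : Finset (Fin n)) D ⊆ {fun _ => 0} := by
        intro δ hδ
        rw [Finset.mem_singleton]
        funext i
        exact (mem_TT.mp hδ).2.1 i (Finset.notMem_empty i)
      calc (TT (∅ : Finset (Fin n)) D).card ≤ 1 := by
            simpa using Finset.card_le_card hsub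
        _ ≤ ((∅ : Finset (Fin n)).card + 1) ^ D := by simp
  | @insert a I ha ih =>
      intro D
      have hmap : ∀ δ ∈ TT (insert a I) D,
          (⟨δ a, Function.update δ a 0⟩ : (_ : ℕ) × (Fin n → ℕ)) ∈
            (Finset.range (D+1)).sigma (fun j => TT I (D - j)) := by
        intro δ hδ
        obtain ⟨hbox, hsupp, hsum⟩ := mem_TT.mp hδ
        rw [Finset.mem_sigma]
        have hsum' : δ a + ∑ i ∈ Finset.univ.erase a, δ i = ∑ i, δ i :=
          Finset.add_sum_erase _ _ (Finset.mem_univ a)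
        have hupd : ∑ i, Function.update δ a 0 i = ∑ i ∈ Finset.univ.erase a, δ i := by
          rw [Finset.sum_update_of_mem (Finset.mem_univ a), zero_add,
            Finset.sdiff_singleton_eq_erase]
        refine ⟨Finset.mem_range.mpr (Nat.lt_succ_of_le (hbox a)), mem_TT.mpr ⟨?_, ?_, ?_⟩⟩
        · dsimp only
          intro i
          rcases eq_or_ne i a with rfl | hia
          · simp
          · rw [Function.update_of_ne hia]
            have h1 : δ i ≤ ∑ j ∈ Finset.univ.erase a, δ j :=
              Finset.single_le_sum (f := fun j => δ j) (fun _ _ => Nat.zero_le _)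
                (Finset.mem_erase.mpr ⟨hia, Finset.mem_univ i⟩)
            omega
        · dsimp only
          intro i hi
          rcases eq_or_ne i a with rfl | hia
          · simp
          · rw [Function.update_of_ne hia]
            refine hsupp i ?_
            simp only [Finset.mem_insert, not_or]
            exact ⟨hia, hi⟩
        · dsimp only
          rw [hupd]; omega
      have hinj : Set.InjOn
          (fun δ : Fin n → ℕ => (⟨δ a, Function.update δ a 0⟩ : (_ : ℕ) × (Fin n → ℕ)))
          (TT (insert a I) D) := by
        intro x _ y _ hxy
        simp only [Sigma.mk.inj_iff] at hxy
        obtain ⟨h1, h2⟩ := hxy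
        have h2' := eq_of_heq h2
        funext i
        rcases eq_or_ne i a with rfl | hia
        · exact h1
        · have := congrFun h2' i
          rwa [Function.update_of_ne hia, Function.update_of_ne hia] at this
      have hcard := Finset.card_le_card_of_injOn _ hmap hinj
      rw [Finset.card_sigma] at hcard
      calc (TT (insert a I) D).card
          ≤ ∑ j ∈ Finset.range (D+1), (TT I (D - j)).card := hcard
        _ ≤ ∑ j ∈ Finset.range (D+1), (I.card + 1) ^ (D - j) :=
            Finset.sum_le_sum fun j _ => ih (D - j)
        _ ≤ (I.card + 2) ^ D := geom_le' _ _
        _ = ((insert a I).card + 1) ^ D := by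
            rw [Finset.card_insert_of_notMem ha]

lemma degreeOf_prod_le {α : Type*} (i : Fin n) (s : Finset α)
    (f : α → MvPolynomial (Fin n) ℝ) :
    MvPolynomial.degreeOf i (∏ x ∈ s, f x) ≤ ∑ x ∈ s, MvPolynomial.degreeOf i (f x) := by
  classical
  induction s using Finset.induction with
  | empty =>
      rw [Finset.prod_empty, Finset.sum_empty, ← MvPolynomial.C_1, MvPolynomial.degreeOf_C]
  | @insert x s hx ih =>
      rw [Finset.prod_insert hx, Finset.sum_insert hx]
      exact le_trans (MvPolynomial.degreeOf_mul_le _ _ _) (by omega)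

lemma degreeOf_Nb_le (h : ℝ) (b : Fin n → ℕ) (i : Fin n) :
    MvPolynomial.degreeOf i (Nb h b) ≤ b i := by
  classical
  rw [Nb]
  refine le_trans (degreeOf_prod_le i _ _) ?_
  have hin : ∀ i' : Fin n,
      MvPolynomial.degreeOf i
        (∏ j ∈ Finset.range (b i'), (MvPolynomial.X i' - MvPolynomial.C ((j:ℝ)*h)))
      ≤ if i = i' then b i' else 0 := by
    intro i'
    refine le_trans (degreeOf_prod_le i _ _) ?_
    have hf : ∀ j : ℕ,
        MvPolynomial.degreeOf i (MvPolynomial.X i' - MvPolynomial.C ((j:ℝ)*h))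
          ≤ if i = i' then 1 else 0 := by
      intro j
      refine le_trans (MvPolynomial.degreeOf_sub_le i _ _) ?_
      rw [MvPolynomial.degreeOf_C, MvPolynomial.degreeOf_X]
      omega
    refine le_trans (Finset.sum_le_sum fun j _ => hf j) ?_
    rw [Finset.sum_const, Finset.card_range, smul_eq_mul]
    rcases eq_or_ne i i' with rfl | hii
    · simp
    · simp [hii]
  refine le_trans (Finset.sum_le_sum fun i' _ => hin i') ?_
  rw [Finset.sum_ite_eq]
  simp

lemma le_of_coeff_Nb_ne_zero (h : ℝ) (b : Fin n → ℕ) (m : Fin n →₀ ℕ)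
    (hc : MvPolynomial.coeff m (Nb h b) ≠ 0) (i : Fin n) : m i ≤ b i := by
  have hm : m ∈ (Nb h b).support := MvPolynomial.mem_support_iff.mpr hc
  exact le_trans (MvPolynomial.monomial_le_degreeOf i hm) (degreeOf_Nb_le h b i)

lemma coeff_Nb_eq_zero (h : ℝ) (b : Fin n → ℕ) (m : Fin n →₀ ℕ) (i : Fin n)
    (hbi : b i ≠ 0) (hmi : m i = 0) : MvPolynomial.coeff m (Nb h b) = 0 := by
  classical
  obtain ⟨k, hk⟩ := Nat.exists_eq_succ_of_ne_zero hbi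
  have hfac : Nb h b =
      ((∏ j ∈ Finset.range k, (MvPolynomial.X i - MvPolynomial.C (((j+1:ℕ):ℝ)*h)))
        * ∏ i' ∈ Finset.univ.erase i,
            ∏ j ∈ Finset.range (b i'), (MvPolynomial.X i' - MvPolynomial.C ((j:ℝ)*h)))
      * MvPolynomial.X i := by
    rw [Nb, ← Finset.mul_prod_erase Finset.univ _ (Finset.mem_univ i), hk,
      Finset.prod_range_succ']
    have h0 : (MvPolynomial.X i - MvPolynomial.C (((0:ℕ):ℝ)*h))
        = (MvPolynomial.X i : MvPolynomial (Fin n) ℝ) := by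
      simp
    rw [h0]
    ring
  rw [hfac, MvPolynomial.coeff_mul_X']
  rw [if_neg]
  simp [Finsupp.mem_support_iff, hmi]

lemma card_support_le_sum (m : Fin n →₀ ℕ) : m.support.card ≤ ∑ i, m i := by
  calc m.support.card = ∑ i ∈ m.support, 1 := by rw [Finset.card_eq_sum_ones]
    _ ≤ ∑ i ∈ m.support, m i := Finset.sum_le_sum fun i hi =>
        Nat.one_le_iff_ne_zero.mpr (Finsupp.mem_support_iff.mp hi)
    _ ≤ ∑ i, m i := Finset.sum_le_sum_of_subset (Finset.subset_univ _)

lemma term_bound (d : ℕ) (hd : 1 ≤ d) (p : MvPolynomial (Fin n) ℝ)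
    (hbound : ∀ x : Fin n → ℝ, (∀ i, x i ∈ Set.Icc (0:ℝ) 1) → |MvPolynomial.eval x p| ≤ 1)
    (b : Fin n → ℕ) (hb : ∀ i, b i ≤ d) (hSS : ∑ i, b i ≤ d) :
    |Aq (1/(d:ℝ)) b p / cB (1/(d:ℝ)) b| * L1 (Nb (1/(d:ℝ)) b) ≤ (4*(d:ℝ))^d := by
  have hd0 : (0:ℝ) < (d:ℝ) := by exact_mod_cast hd
  have h1 := abs_Aq_le d hd p hbound b hb
  have h2 := inv_cB_le d hd b
  have h3 := L1_Nb_le d hd b hb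
  have hcpos := cB_pos d hd b
  have habs : |Aq (1/(d:ℝ)) b p / cB (1/(d:ℝ)) b|
      ≤ 2 ^ (∑ i, b i) * (d:ℝ) ^ (∑ i, b i) := by
    rw [abs_div, abs_of_pos hcpos, div_eq_mul_one_div]
    have hAnn : (0:ℝ) ≤ |Aq (1/(d:ℝ)) b p| := abs_nonneg _
    have hc1 : (0:ℝ) ≤ 1 / cB (1/(d:ℝ)) b := by positivity
    exact mul_le_mul h1 h2 hc1 (by positivity)
  have hstep : |Aq (1/(d:ℝ)) b p / cB (1/(d:ℝ)) b| * L1 (Nb (1/(d:ℝ)) b)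
      ≤ (2 ^ (∑ i, b i) * (d:ℝ) ^ (∑ i, b i)) * 2 ^ (∑ i, b i) :=
    mul_le_mul habs h3 (L1_nonneg _) (by positivity)
  refine le_trans hstep ?_
  have heq : (2 ^ (∑ i, b i) * (d:ℝ) ^ (∑ i, b i)) * 2 ^ (∑ i, b i)
      = (4*(d:ℝ)) ^ (∑ i, b i) := by
    rw [mul_pow]
    ring_nf
    rw [show (4:ℝ) = 2*2 by norm_num, mul_pow]
    ring
  rw [heq]
  refine pow_le_pow_right₀ ?_ hSS
  have : (1:ℝ) ≤ (d:ℝ) := by exact_mod_cast hd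
  linarith

lemma part2_core (d : ℕ) (hd : 1 ≤ d) (p : MvPolynomial (Fin n) ℝ)
    (hdeg : p.totalDegree ≤ d)
    (hbound : ∀ x : Fin n → ℝ, (∀ i, x i ∈ Set.Icc (0:ℝ) 1) → |MvPolynomial.eval x p| ≤ 1) :
    L1 p ≤ (4*(d:ℝ))^d * ((n:ℝ)+1)^d := by
  classical
  have hd0 : (0:ℝ) < (d:ℝ) := by exact_mod_cast hd
  have hh : (1/(d:ℝ)) ≠ 0 := by positivity
  set h : ℝ := 1/(d:ℝ) with hhdef
  set box := Fintype.piFinset (fun _ : Fin n => Finset.range (d + 1)) with hbox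
  have hkey := key h hh d p hdeg
  have hL1 : L1 p ≤ ∑ b ∈ box, |Aq h b p / cB h b| * L1 (Nb h b) := by
    conv_lhs => rw [hkey]
    refine le_trans (L1_sum_le _ _) (Finset.sum_le_sum fun b _ => ?_)
    exact L1_smul_le _ _
  set F := box.filter (fun b => ∑ i, b i ≤ d) with hF
  have hrestrict : ∑ b ∈ box, |Aq h b p / cB h b| * L1 (Nb h b)
      = ∑ b ∈ F, |Aq h b p / cB h b| * L1 (Nb h b) := by
    refine (Finset.sum_subset (Finset.filter_subset _ _) ?_).symm
    intro b hbbox hbF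
    have hgt : d < ∑ i, b i := by
      by_contra hc
      exact hbF (Finset.mem_filter.mpr ⟨hbbox, by omega⟩)
    rw [Aq_eq_zero h b p (by omega), zero_div, abs_zero, zero_mul]
  have hterm : ∀ b ∈ F, |Aq h b p / cB h b| * L1 (Nb h b) ≤ (4*(d:ℝ))^d := by
    intro b hbF
    obtain ⟨hbbox, hSS⟩ := Finset.mem_filter.mp hbF
    have hb : ∀ i, b i ≤ d := fun i =>
      Nat.lt_succ_iff.mp (Finset.mem_range.mp ((Fintype.mem_piFinset.mp hbbox) i))
    exact term_bound d hd p hbound b hb hSS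
  have hcard : F.card ≤ (n+1)^d := by
    have hsub : F ⊆ TT (Finset.univ : Finset (Fin n)) d := by
      intro b hbF
      obtain ⟨hbbox, hSS⟩ := Finset.mem_filter.mp hbF
      refine mem_TT.mpr ⟨?_, fun i hi => absurd (Finset.mem_univ i) hi, hSS⟩
      intro i
      exact Nat.lt_succ_iff.mp (Finset.mem_range.mp ((Fintype.mem_piFinset.mp hbbox) i))
    calc F.card ≤ (TT (Finset.univ : Finset (Fin n)) d).card := Finset.card_le_card hsub
      _ ≤ ((Finset.univ : Finset (Fin n)).card + 1)^d := TT_card_le _ d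
      _ = (n+1)^d := by rw [Finset.card_univ, Fintype.card_fin]
  calc L1 p ≤ ∑ b ∈ F, |Aq h b p / cB h b| * L1 (Nb h b) := by rw [← hrestrict]; exact hL1
    _ ≤ ∑ _b ∈ F, (4*(d:ℝ))^d := Finset.sum_le_sum hterm
    _ = F.card * (4*(d:ℝ))^d := by rw [Finset.sum_const, nsmul_eq_mul]
    _ ≤ ((n+1)^d : ℕ) * (4*(d:ℝ))^d := by
        refine mul_le_mul_of_nonneg_right ?_ (by positivity)
        exact_mod_cast hcard
    _ = (4*(d:ℝ))^d * ((n:ℝ)+1)^d := by push_cast; ring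

lemma part1_core (d : ℕ) (hd : 1 ≤ d) (p : MvPolynomial (Fin n) ℝ)
    (hdeg : p.totalDegree ≤ d)
    (hbound : ∀ x : Fin n → ℝ, (∀ i, x i ∈ Set.Icc (0:ℝ) 1) → |MvPolynomial.eval x p| ≤ 1)
    (m : Fin n →₀ ℕ) :
    |MvPolynomial.coeff m p| ≤ (4*(d:ℝ))^d * ((d:ℝ)+1)^d := by
  classical
  have hd0 : (0:ℝ) < (d:ℝ) := by exact_mod_cast hd
  have hh : (1/(d:ℝ)) ≠ 0 := by positivity
  set h : ℝ := 1/(d:ℝ) with hhdef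
  by_cases hm : ∑ i, m i ≤ d
  case neg =>
    have hz : MvPolynomial.coeff m p = 0 := by
      by_contra hc
      have hmem : m ∈ p.support := MvPolynomial.mem_support_iff.mpr hc
      have := MvPolynomial.le_totalDegree hmem
      rw [sum_fin] at this
      omega
    rw [hz, abs_zero]
    positivity
  case pos =>
  set box := Fintype.piFinset (fun _ : Fin n => Finset.range (d + 1)) with hbox
  have hform := coeff_formula h hh d p hdeg m
  set Adm := box.filter
    (fun b => Aq h b p ≠ 0 ∧ MvPolynomial.coeff m (Nb h b) ≠ 0) with hAdm
  have hrestrict : ∑ b ∈ box, (Aq h b p / cB h b) * MvPolynomial.coeff m (Nb h b)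
      = ∑ b ∈ Adm, (Aq h b p / cB h b) * MvPolynomial.coeff m (Nb h b) := by
    refine (Finset.sum_subset (Finset.filter_subset _ _) ?_).symm
    intro b hbbox hbF
    rcases Decidable.em (Aq h b p = 0) with hA | hA
    · rw [hA, zero_div, zero_mul]
    rcases Decidable.em (MvPolynomial.coeff m (Nb h b) = 0) with hB | hB
    · rw [hB, mul_zero]
    exact absurd (Finset.mem_filter.mpr ⟨hbbox, hA, hB⟩) hbF
  have hfacts : ∀ b ∈ Adm, (∀ i, b i ≤ d) ∧ (∑ i, b i ≤ d) ∧ (∀ i, m i ≤ b i)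
      ∧ (∀ i, m i = 0 → b i = 0) := by
    intro b hbA
    obtain ⟨hbbox, hA, hB⟩ := Finset.mem_filter.mp hbA
    have hb : ∀ i, b i ≤ d := fun i =>
      Nat.lt_succ_iff.mp (Finset.mem_range.mp ((Fintype.mem_piFinset.mp hbbox) i))
    have hSS : ∑ i, b i ≤ d := by
      by_contra hc
      exact hA (Aq_eq_zero h b p (by omega))
    refine ⟨hb, hSS, fun i => le_of_coeff_Nb_ne_zero h b m hB i, fun i hmi => ?_⟩
    by_contra hbi
    exact hB (coeff_Nb_eq_zero h b m i hbi hmi)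
  have hterm : ∀ b ∈ Adm, |(Aq h b p / cB h b) * MvPolynomial.coeff m (Nb h b)|
      ≤ (4*(d:ℝ))^d := by
    intro b hbA
    obtain ⟨hb, hSS, _, _⟩ := hfacts b hbA
    rw [abs_mul]
    refine le_trans (mul_le_mul_of_nonneg_left (abs_coeff_le_L1 _ m) (abs_nonneg _)) ?_
    exact term_bound d hd p hbound b hb hSS
  have hcard : Adm.card ≤ (d+1)^d := by
    have hinj : Set.InjOn (fun (b : Fin n → ℕ) (i : Fin n) => b i - m i) Adm := by
      intro x hx y hy hxy
      obtain ⟨_, _, hmx, _⟩ := hfacts x hx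
      obtain ⟨_, _, hmy, _⟩ := hfacts y hy
      funext i
      have := congrFun hxy i
      simp only at this
      have h1 := hmx i
      have h2 := hmy i
      omega
    have hmapmem : ∀ b ∈ Adm, (fun i => b i - m i) ∈ TT m.support (d - ∑ i, m i) := by
      intro b hbA
      obtain ⟨hb, hSS, hmb, hsupp⟩ := hfacts b hbA
      have hsumeq : (∑ i, (b i - m i)) + ∑ i, m i = ∑ i, b i := by
        rw [← Finset.sum_add_distrib]
        exact Finset.sum_congr rfl fun i _ => by
          have := hmb i; omega
      refine mem_TT.mpr ⟨?_, ?_, ?_⟩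
      · intro i
        have hle : b i - m i ≤ ∑ j, (b j - m j) :=
          Finset.single_le_sum (f := fun j => b j - m j) (fun _ _ => Nat.zero_le _)
            (Finset.mem_univ i)
        omega
      · intro i hi
        have hmi : m i = 0 := Finsupp.notMem_support_iff.mp hi
        have := hsupp i hmi
        omega
      · omega
    calc Adm.card ≤ (TT m.support (d - ∑ i, m i)).card :=
          Finset.card_le_card_of_injOn _ hmapmem hinj
      _ ≤ (m.support.card + 1) ^ (d - ∑ i, m i) := TT_card_le _ _
      _ ≤ (d+1)^d := by
         refine le_trans (Nat.pow_le_pow_left ?_ _) (Nat.pow_le_pow_right (by omega) ?_)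
         · have h1 := card_support_le_sum m
           omega
         · omega
  calc |MvPolynomial.coeff m p|
      = |∑ b ∈ Adm, (Aq h b p / cB h b) * MvPolynomial.coeff m (Nb h b)| := by
        rw [hform, hrestrict]
    _ ≤ ∑ b ∈ Adm, |(Aq h b p / cB h b) * MvPolynomial.coeff m (Nb h b)| :=
        Finset.abs_sum_le_sum_abs _ _
    _ ≤ ∑ _b ∈ Adm, (4*(d:ℝ))^d := Finset.sum_le_sum hterm
    _ = Adm.card * (4*(d:ℝ))^d := by rw [Finset.sum_const, nsmul_eq_mul]
    _ ≤ ((d+1)^d : ℕ) * (4*(d:ℝ))^d := by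
        refine mul_le_mul_of_nonneg_right ?_ (by positivity)
        exact_mod_cast hcard
    _ = (4*(d:ℝ))^d * ((d:ℝ)+1)^d := by push_cast; ring

theorem main (n d : ℕ) (hd : 1 ≤ d) (p : MvPolynomial (Fin n) ℝ)
    (hdeg : p.totalDegree ≤ d)
    (hbound : ∀ x : Fin n → ℝ, (∀ i, x i ∈ Set.Icc (0:ℝ) 1) →
      |MvPolynomial.eval x p| ≤ 1) :
    (∀ m, |MvPolynomial.coeff m p| ≤ ((2 * d : ℕ) : ℝ) ^ (3 * d)) ∧
    (∑ m ∈ p.support, |MvPolynomial.coeff m p|) ≤ ((2 * (n + d) : ℕ) : ℝ) ^ (3 * d) := by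
  have hdr : (1:ℝ) ≤ (d:ℝ) := by exact_mod_cast hd
  constructor
  · intro m
    refine le_trans (part1_core d hd p hdeg hbound m) ?_
    have hcast : ((2*d : ℕ):ℝ) = 2*(d:ℝ) := by push_cast; ring
    rw [hcast, pow_mul, ← mul_pow]
    refine pow_le_pow_left₀ (by positivity) ?_ d
    have hd2 : (d:ℝ) ≤ (d:ℝ)^2 := by nlinarith
    have hd3 : (d:ℝ)^2 ≤ (d:ℝ)^3 := by nlinarith
    nlinarith [hd2, hd3]
  · refine le_trans (part2_core d hd p hdeg hbound) ?_
    have hcast : ((2*(n+d) : ℕ):ℝ) = 2*((n:ℝ)+(d:ℝ)) := by push_cast; ring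
    rw [hcast, pow_mul, ← mul_pow]
    refine pow_le_pow_left₀ (by positivity) ?_ d
    have hnr : (0:ℝ) ≤ (n:ℝ) := Nat.cast_nonneg n
    have h1 : (d:ℝ) ≤ (n:ℝ)+(d:ℝ) := by linarith
    have h2 : (n:ℝ)+1 ≤ (n:ℝ)+(d:ℝ) := by linarith
    have h3 : (1:ℝ) ≤ (n:ℝ)+(d:ℝ) := by linarith
    have h4 : (d:ℝ)*((n:ℝ)+1) ≤ ((n:ℝ)+(d:ℝ))*((n:ℝ)+(d:ℝ)) :=
      mul_le_mul h1 h2 (by linarith) (by linarith)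
    have h5 : ((n:ℝ)+(d:ℝ))^2 ≤ ((n:ℝ)+(d:ℝ))^3 := by nlinarith [h3]
    nlinarith [h4, h5]

end MV

end Stmt19Aux



open MvPolynomial

noncomputable section

/-- coefficient bounds for polynomials bounded on the unit cube. -/
theorem stmt19 (n d : ℕ) (hd : 1 ≤ d) (p : MvPolynomial (Fin n) ℝ)
    (hdeg : p.totalDegree ≤ d)
    (hbound : ∀ x : Fin n → ℝ, (∀ i, x i ∈ Set.Icc (0:ℝ) 1) →
      |MvPolynomial.eval x p| ≤ 1) :
    (∀ m, |MvPolynomial.coeff m p| ≤ ((2 * d : ℕ) : ℝ) ^ (3 * d)) ∧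
    (∑ m ∈ p.support, |MvPolynomial.coeff m p|) ≤ ((2 * (n + d) : ℕ) : ℝ) ^ (3 * d) :=
  Stmt19Aux.main n d hd p hdeg hbound

end
end
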